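/- Let Ψ ⊆ Φ be a set of linearly independent roots in a root system Φ. Then there exists a simple system Π of Φ such that every element of Ψ is a positive root with respect to Π (indeed, a nonnegative integer combination of Π). -/

import Mathlib

open scoped RealInnerProductSpace

/-- A (reduced) root system in a real inner product space. -/
def IsRootSystem {V : Type*} [NormedAddCommGroup V] [InnerProductSpace ℝ V] (Φ : Set V) : Prop :=
  Φ.Finite ∧ (0 : V) ∉ Φ ∧ Submodule.span ℝ Φ = ⊤ ∧
  (∀ α ∈ Φ, ∀ β ∈ Φ, β - (2 * ⟪α, β⟫ / ⟪α, α⟫) • α ∈ Φ) ∧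
  (∀ α ∈ Φ, ∀ β ∈ Φ, ∃ n : ℤ, 2 * ⟪α, β⟫ / ⟪α, α⟫ = (n : ℝ)) ∧
  (∀ α ∈ Φ, ∀ t : ℝ, t • α ∈ Φ → t = 1 ∨ t = -1)


/-- `P` is a simple system (base) for the root system `Φ`: a linearly independent
spanning subset of `Φ` such that every root is a nonnegative or nonpositive integer
combination of `P`. -/
def IsSimpleSystem {V : Type*} [NormedAddCommGroup V] [InnerProductSpace ℝ V]
    (Φ : Set V) (P : Finset V) : Prop :=
  ↑P ⊆ Φ ∧ LinearIndependent ℝ (fun x : P => (x : V)) ∧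
    Submodule.span ℝ (P : Set V) = ⊤ ∧
    ∀ γ ∈ Φ, (∃ n : V → ℕ, γ = ∑ α ∈ P, (n α : ℝ) • α) ∨
             (∃ n : V → ℕ, γ = -∑ α ∈ P, (n α : ℝ) • α)

section Aux

open Finset

variable {V : Type*} [NormedAddCommGroup V] [InnerProductSpace ℝ V]

lemma aux_dense_ne (a : V) (ha : a ≠ 0) : Dense {v : V | ⟪v, a⟫ ≠ 0} := by
  rw [dense_iff_inter_open]
  intro U hU ⟨x, hx⟩
  by_cases hxa : ⟪x, a⟫ ≠ 0
  · exact ⟨x, hx, hxa⟩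
  push_neg at hxa
  have hg : Continuous (fun t : ℝ => x + t • a) := by continuity
  have h0 : (0 : ℝ) ∈ (fun t : ℝ => x + t • a) ⁻¹' U := by
    simp [Set.mem_preimage, hx]
  obtain ⟨ε, hε, hball⟩ := Metric.isOpen_iff.mp (hU.preimage hg) 0 h0
  refine ⟨x + (ε/2) • a, hball ?_, ?_⟩
  · rw [Metric.mem_ball, Real.dist_eq, sub_zero, abs_of_pos (half_pos hε)]
    linarith
  · simp only [Set.mem_setOf_eq, inner_add_left, real_inner_smul_left, hxa, zero_add]
    have : ⟪a, a⟫ ≠ 0 := fun hc => ha ((inner_self_eq_zero (𝕜 := ℝ)).mp hc)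
    positivity

lemma aux_dense_forall (s : Finset V) (hs : ∀ a ∈ s, a ≠ 0) :
    IsOpen {v : V | ∀ a ∈ s, ⟪v, a⟫ ≠ 0} ∧ Dense {v : V | ∀ a ∈ s, ⟪v, a⟫ ≠ 0} := by
  classical
  induction s using Finset.induction with
  | empty => simp
  | @insert a s ha ih =>
    have hset : {v : V | ∀ b ∈ insert a s, ⟪v, b⟫ ≠ 0}
        = {v : V | ⟪v, a⟫ ≠ 0} ∩ {v : V | ∀ b ∈ s, ⟪v, b⟫ ≠ 0} := by
      ext v; simp [forall_and]
    have hao : IsOpen {v : V | ⟪v, a⟫ ≠ 0} := by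
      have : Continuous (fun v : V => ⟪v, a⟫) := continuous_id.inner continuous_const
      exact isOpen_compl_singleton.preimage this
    obtain ⟨iho, ihd⟩ := ih (fun b hb => hs b (Finset.mem_insert_of_mem hb))
    rw [hset]
    exact ⟨hao.inter iho,
      (aux_dense_ne a (hs a (Finset.mem_insert_self a s))).inter_of_isOpen_left ihd hao⟩

lemma exists_regular (Φ : Set V) (hfin : Φ.Finite) (h0 : (0:V) ∉ Φ)
    (hspan : Submodule.span ℝ Φ = ⊤) (Ψ : Set V) (hΨ : Ψ ⊆ Φ)
    (hli : LinearIndependent ℝ (fun x : Ψ => (x : V))) :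
    ∃ f : V, (∀ α ∈ Φ, ⟪f, α⟫ ≠ 0) ∧ ∀ ψ ∈ Ψ, 0 < ⟪f, ψ⟫ := by
  classical
  have hfd : FiniteDimensional ℝ V := by
    have h1 : FiniteDimensional ℝ (Submodule.span ℝ Φ) := FiniteDimensional.span_of_finite ℝ hfin
    rw [hspan] at h1
    exact (Submodule.topEquiv : (⊤ : Submodule ℝ V) ≃ₗ[ℝ] V).finiteDimensional
  obtain ⟨f0, hf0⟩ : ∃ f0 : V, ∀ ψ ∈ Ψ, ⟪f0, ψ⟫ = 1 := by
    set W := Submodule.span ℝ (Set.range (fun x : Ψ => (x : V))) with hW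
    let B : Module.Basis Ψ ℝ W := Module.Basis.span hli
    obtain ⟨g, hg⟩ := LinearMap.exists_extend (B.constr ℝ (fun _ => (1:ℝ)))
    refine ⟨(InnerProductSpace.toDual ℝ V).symm (LinearMap.toContinuousLinearMap g), ?_⟩
    intro ψ hψ
    rw [InnerProductSpace.toDual_symm_apply]
    have hmem : ψ ∈ W := Submodule.subset_span ⟨⟨ψ, hψ⟩, rfl⟩
    have h1 : (⟨ψ, hmem⟩ : W) = B ⟨ψ, hψ⟩ := by
      apply Subtype.ext
      rw [show B ⟨ψ, hψ⟩ = Module.Basis.span hli ⟨ψ, hψ⟩ from rfl, Module.Basis.span_apply]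
    have h2 : g ψ = (B.constr ℝ (fun _ => (1:ℝ))) ⟨ψ, hmem⟩ := by
      conv_lhs => rw [show ψ = W.subtype ⟨ψ, hmem⟩ from rfl]
      rw [← hg]; rfl
    simp only [LinearMap.coe_toContinuousLinearMap']
    rw [h2, h1, Module.Basis.constr_basis]
  have hΨfin : Ψ.Finite := hfin.subset hΨ
  set U : Set V := {v | ∀ ψ ∈ hΨfin.toFinset, 0 < ⟪v, ψ⟫} with hUdef
  have hUopen : IsOpen U := by
    have : U = ⋂ ψ ∈ hΨfin.toFinset, {v : V | 0 < ⟪v, ψ⟫} := by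
      ext v; simp [hUdef]
    rw [this]
    refine isOpen_biInter_finset fun ψ _ => ?_
    show IsOpen ((fun v : V => ⟪v, ψ⟫) ⁻¹' Set.Ioi 0)
    exact IsOpen.preimage (continuous_id.inner continuous_const) isOpen_Ioi
  have hUne : U.Nonempty := ⟨f0, fun ψ hψ => by
    rw [hf0 ψ (hΨfin.mem_toFinset.mp hψ)]; norm_num⟩
  obtain ⟨_, hDdense⟩ := aux_dense_forall (V := V) hfin.toFinset
    (fun a ha => fun hc => h0 (hc ▸ hfin.mem_toFinset.mp ha))
  obtain ⟨f, hfD, hfU⟩ := hDdense.exists_mem_open hUopen hUne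
  exact ⟨f, fun α hα => hfD α (hfin.mem_toFinset.mpr hα),
    fun ψ hψ => hfU ψ (hΨfin.mem_toFinset.mpr hψ)⟩

lemma root_sub (Φ : Set V) (h : IsRootSystem Φ) {α β : V} (hα : α ∈ Φ) (hβ : β ∈ Φ)
    (hne : α ≠ β) (hip : 0 < ⟪α, β⟫) : α - β ∈ Φ ∨ β - α ∈ Φ := by
  obtain ⟨hfin, h0, hspan, hrefl, hint, hred⟩ := h
  have hα0 : α ≠ 0 := fun hc => h0 (hc ▸ hα)
  have hβ0 : β ≠ 0 := fun hc => h0 (hc ▸ hβ)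
  have ha : 0 < ⟪α, α⟫ :=
    lt_of_le_of_ne real_inner_self_nonneg (Ne.symm ((inner_self_ne_zero (𝕜 := ℝ)).mpr hα0))
  have hb : 0 < ⟪β, β⟫ :=
    lt_of_le_of_ne real_inner_self_nonneg (Ne.symm ((inner_self_ne_zero (𝕜 := ℝ)).mpr hβ0))
  obtain ⟨n, hn⟩ := hint α hα β hβ
  obtain ⟨m, hm⟩ := hint β hβ α hα
  rw [real_inner_comm α β] at hm
  have hn1 : 1 ≤ n := by
    have : (0:ℝ) < (n:ℝ) := by rw [← hn]; positivity
    exact_mod_cast this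
  have hm1 : 1 ≤ m := by
    have : (0:ℝ) < (m:ℝ) := by rw [← hm]; positivity
    exact_mod_cast this
  have hna : ‖α‖ ≠ 0 := norm_ne_zero_iff.mpr hα0
  have hcs : ⟪α, β⟫ < ‖α‖ * ‖β‖ := by
    rw [inner_lt_norm_mul_iff_real]
    intro hc
    have hβeq : β = (‖β‖ / ‖α‖) • α := by
      apply smul_right_injective V hna
      show ‖α‖ • β = ‖α‖ • (‖β‖ / ‖α‖) • α
      rw [smul_smul, mul_div_cancel₀ _ hna, hc]
    have := hred α hα (‖β‖ / ‖α‖) (hβeq ▸ hβ)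
    rcases this with h1 | h1
    · exact hne (by rw [hβeq, h1, one_smul])
    · have : (0:ℝ) < ‖β‖ / ‖α‖ := by positivity
      rw [h1] at this; norm_num at this
  have hnm : (n : ℝ) * (m : ℝ) < 4 := by
    rw [← hn, ← hm, div_mul_div_comm]
    rw [div_lt_iff₀ (by positivity)]
    have h1 : ⟪α,β⟫ * ⟪α,β⟫ < (‖α‖*‖β‖) * (‖α‖*‖β‖) :=
      mul_self_lt_mul_self (le_of_lt hip) hcs
    calc 2 * ⟪α,β⟫ * (2 * ⟪α,β⟫) = 4 * (⟪α,β⟫ * ⟪α,β⟫) := by ring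
    _ < 4 * ((‖α‖*‖β‖) * (‖α‖*‖β‖)) := by linarith
    _ = 4 * (⟪α,α⟫ * ⟪β,β⟫) := by
        rw [real_inner_self_eq_norm_mul_norm, real_inner_self_eq_norm_mul_norm]; ring
  have hnm' : n * m < 4 := by exact_mod_cast hnm
  have hcase : n = 1 ∨ m = 1 := by
    by_contra hc
    push_neg at hc
    have h2 : 2 ≤ n := by omega
    have h3 : 2 ≤ m := by omega
    nlinarith
  rcases hcase with h1 | h1
  · right
    have := hrefl α hα β hβ
    rw [hn, h1] at this
    simpa using this
  · left
    have := hrefl β hβ α hα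
    rw [real_inner_comm α β, hm, h1] at this
    simpa using this

lemma obtuse_li (f : V) (S : Finset V)
    (hpos : ∀ v ∈ S, 0 < ⟪f, v⟫)
    (hob : ∀ v ∈ S, ∀ w ∈ S, v ≠ w → ⟪v, w⟫ ≤ 0) :
    LinearIndependent ℝ (fun x : S => (x : V)) := by
  classical
  rw [Fintype.linearIndependent_iff]
  intro g hg
  set P : Finset S := univ.filter (fun i => 0 < g i) with hP
  set N : Finset S := univ.filter (fun i => g i < 0) with hN
  set u : V := ∑ i ∈ P, g i • (i : V) with hu
  have hNsub : N ⊆ univ \ P := by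
    intro i hi
    simp only [hN, mem_filter, mem_univ, true_and] at hi
    simp only [mem_sdiff, mem_univ, true_and, hP, mem_filter, not_and]
    intro _; linarith
  have h1 : ∑ i ∈ univ \ P, g i • (i : V) = ∑ j ∈ N, g j • (j : V) := by
    refine (Finset.sum_subset hNsub ?_).symm
    intro x hx hnx
    have hx1 : ¬ 0 < g x := by
      simp only [mem_sdiff, hP, mem_filter, mem_univ, true_and, not_and] at hx
      tauto
    have hx2 : ¬ g x < 0 := by
      simp only [hN, mem_filter, mem_univ, true_and] at hnx; exact hnx
    have : g x = 0 := by linarith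
    rw [this, zero_smul]
  have huN : u = ∑ j ∈ N, (-g j) • (j : V) := by
    have hsplit : ∑ i : S, g i • (i : V) = u + ∑ i ∈ univ \ P, g i • (i : V) := by
      rw [hu, ← Finset.sum_union (Finset.disjoint_sdiff)]
      congr 1
      rw [Finset.union_sdiff_of_subset (Finset.subset_univ P)]
    rw [hg, h1] at hsplit
    have h2 : u = -∑ j ∈ N, g j • (j : V) := eq_neg_of_add_eq_zero_left hsplit.symm
    rw [h2, ← Finset.sum_neg_distrib]
    exact Finset.sum_congr rfl fun j _ => (neg_smul _ _).symm
  have hne : ∀ (i j : S), i ∈ P → j ∈ N → ⟪(i : V), (j : V)⟫ ≤ 0 := by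
    intro i j hi hj
    have hij : (i : V) ≠ (j : V) := by
      intro hc
      have : i = j := Subtype.ext hc
      subst this
      simp only [hP, hN, mem_filter, mem_univ, true_and] at hi hj
      linarith
    exact hob i i.2 j j.2 hij
  have hu2 : ⟪u, u⟫ ≤ 0 := by
    have hexp : ⟪u, u⟫ = ∑ i ∈ P, ∑ j ∈ N, g i * ((-g j) * ⟪(i:V), (j:V)⟫) := by
      have step : ⟪u, u⟫ = ⟪∑ i ∈ P, g i • (i:V), ∑ j ∈ N, (-g j) • (j:V)⟫ := by
        rw [← hu, ← huN]
      rw [step]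
      simp only [sum_inner, inner_sum, real_inner_smul_left, real_inner_smul_right]
      rw [Finset.sum_comm]
      exact Finset.sum_congr rfl fun i _ => Finset.sum_congr rfl fun j _ => by ring
    rw [hexp]
    refine Finset.sum_nonpos fun i hi => Finset.sum_nonpos fun j hj => ?_
    have hgi : 0 < g i := by simp only [hP, mem_filter, mem_univ, true_and] at hi; exact hi
    have hgj : g j < 0 := by simp only [hN, mem_filter, mem_univ, true_and] at hj; exact hj
    have := hne i j hi hj
    nlinarith [mul_nonneg (mul_pos hgi (neg_pos.mpr hgj)).le (neg_nonneg.mpr this)]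
  have hu0 : u = 0 := by
    rw [← inner_self_eq_zero (𝕜 := ℝ)]
    exact le_antisymm hu2 real_inner_self_nonneg
  have hPe : ∀ i ∈ P, g i = 0 := by
    intro i hi
    exfalso
    have hfu : ⟪f, u⟫ = ∑ i ∈ P, g i * ⟪f, (i:V)⟫ := by
      rw [hu, inner_sum]
      exact Finset.sum_congr rfl fun i _ => real_inner_smul_right _ _ _
    rw [hu0, inner_zero_right] at hfu
    have hpos' : 0 < ∑ i ∈ P, g i * ⟪f, (i:V)⟫ := by
      refine Finset.sum_pos (fun j hj => ?_) ⟨i, hi⟩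
      have hgj : 0 < g j := by simp only [hP, mem_filter, mem_univ, true_and] at hj; exact hj
      exact mul_pos hgj (hpos j j.2)
    linarith
  have hNe : ∀ j ∈ N, g j = 0 := by
    intro j hj
    exfalso
    have hfu : ⟪f, u⟫ = ∑ j ∈ N, (-g j) * ⟪f, (j:V)⟫ := by
      rw [huN, inner_sum]
      exact Finset.sum_congr rfl fun j _ => real_inner_smul_right _ _ _
    rw [hu0, inner_zero_right] at hfu
    have hpos' : 0 < ∑ j ∈ N, (-g j) * ⟪f, (j:V)⟫ := by
      refine Finset.sum_pos (fun k hk => ?_) ⟨j, hj⟩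
      have hgk : g k < 0 := by simp only [hN, mem_filter, mem_univ, true_and] at hk; exact hk
      exact mul_pos (by linarith) (hpos k k.2)
    linarith
  intro i
  by_contra hgi
  rcases lt_or_gt_of_ne hgi with hlt | hgt
  · exact hgi (hNe i (by simp [hN, hlt]))
  · exact hgi (hPe i (by simp [hP, hgt]))

end Aux

theorem stmt12 {V : Type*} [NormedAddCommGroup V] [InnerProductSpace ℝ V]
    (Φ : Set V) (h : IsRootSystem Φ) (Ψ : Set V) (hΨ : Ψ ⊆ Φ)
    (hli : LinearIndependent ℝ (fun x : Ψ => (x : V))) :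
    ∃ P : Finset V, IsSimpleSystem Φ P ∧
      ∀ ψ ∈ Ψ, ∃ n : V → ℕ, ψ = ∑ α ∈ P, (n α : ℝ) • α := by
  classical
  obtain ⟨hfin, h0, hspan, hrefl, hint, hred⟩ := h
  obtain ⟨f, hreg, hΨpos⟩ := exists_regular Φ hfin h0 hspan Ψ hΨ hli
  set Pos : Finset V := hfin.toFinset.filter (fun α => 0 < ⟪f, α⟫) with hPosDef
  set Δ : Finset V := Pos.filter (fun α => ¬ ∃ β ∈ Pos, ∃ γ ∈ Pos, α = β + γ) with hΔDef
  have hPosΦ : ∀ α ∈ Pos, α ∈ Φ := fun α hα =>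
    hfin.mem_toFinset.mp (Finset.mem_filter.mp hα).1
  have hPosf : ∀ α ∈ Pos, 0 < ⟪f, α⟫ := fun α hα => (Finset.mem_filter.mp hα).2
  have hmemPos : ∀ α, α ∈ Φ → 0 < ⟪f, α⟫ → α ∈ Pos := fun α h1 h2 =>
    Finset.mem_filter.mpr ⟨hfin.mem_toFinset.mpr h1, h2⟩
  have hΔPos : ∀ α ∈ Δ, α ∈ Pos := fun α hα => (Finset.mem_filter.mp hα).1
  have hneg : ∀ α ∈ Φ, -α ∈ Φ := by
    intro α hα
    have hα0 : α ≠ 0 := fun hc => h0 (hc ▸ hα)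
    have haa : ⟪α, α⟫ ≠ 0 := (inner_self_ne_zero (𝕜 := ℝ)).mpr hα0
    have h2 : 2 * ⟪α, α⟫ / ⟪α, α⟫ = (2:ℝ) := by field_simp
    have := hrefl α hα α hα
    rw [h2] at this
    have heq : α - (2:ℝ) • α = -α := by
      rw [two_smul]; abel
    rwa [heq] at this
  have posOrNeg : ∀ γ ∈ Φ, γ ∈ Pos ∨ -γ ∈ Pos := by
    intro γ hγ
    rcases (hreg γ hγ).lt_or_gt with hlt | hgt
    · right
      refine hmemPos _ (hneg γ hγ) ?_
      rw [inner_neg_right]; linarith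
    · exact Or.inl (hmemPos _ hγ hgt)
  -- decomposition into indecomposables
  have decomp : ∀ α ∈ Pos, ∃ n : V → ℕ, α = ∑ p ∈ Δ, (n p : ℝ) • p := by
    have key : ∀ k : ℕ, ∀ α ∈ Pos,
        (Pos.filter (fun γ => ⟪f, γ⟫ < ⟪f, α⟫)).card ≤ k →
        ∃ n : V → ℕ, α = ∑ p ∈ Δ, (n p : ℝ) • p := by
      intro k
      induction k with
      | zero =>
        intro α hα hcard
        by_cases hαΔ : α ∈ Δ
        · refine ⟨fun v => if v = α then 1 else 0, ?_⟩
          rw [Finset.sum_eq_single_of_mem α hαΔ (fun b _ hbne => by simp [hbne])]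
          simp
        · exfalso
          have : ∃ β ∈ Pos, ∃ γ ∈ Pos, α = β + γ := by
            by_contra hc
            exact hαΔ (Finset.mem_filter.mpr ⟨hα, hc⟩)
          obtain ⟨β, hβ, γ, hγ, heq⟩ := this
          have hβlt : ⟪f, β⟫ < ⟪f, α⟫ := by
            have := hPosf γ hγ
            rw [heq, inner_add_right]; linarith
          have : β ∈ Pos.filter (fun γ => ⟪f, γ⟫ < ⟪f, α⟫) :=
            Finset.mem_filter.mpr ⟨hβ, hβlt⟩
          have := Finset.card_pos.mpr ⟨β, this⟩
          omega
      | succ k ih =>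
        intro α hα hcard
        by_cases hαΔ : α ∈ Δ
        · refine ⟨fun v => if v = α then 1 else 0, ?_⟩
          rw [Finset.sum_eq_single_of_mem α hαΔ (fun b _ hbne => by simp [hbne])]
          simp
        · have : ∃ β ∈ Pos, ∃ γ ∈ Pos, α = β + γ := by
            by_contra hc
            exact hαΔ (Finset.mem_filter.mpr ⟨hα, hc⟩)
          obtain ⟨β, hβ, γ, hγ, heq⟩ := this
          have hβlt : ⟪f, β⟫ < ⟪f, α⟫ := by
            have := hPosf γ hγ
            rw [heq, inner_add_right]; linarith
          have hγlt : ⟪f, γ⟫ < ⟪f, α⟫ := by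
            have := hPosf β hβ
            rw [heq, inner_add_right]; linarith
          have hsublt : ∀ δ ∈ Pos, ⟪f, δ⟫ < ⟪f, α⟫ →
              (Pos.filter (fun x => ⟪f, x⟫ < ⟪f, δ⟫)).card ≤ k := by
            intro δ hδ hδlt
            have hsubset : Pos.filter (fun x => ⟪f, x⟫ < ⟪f, δ⟫) ⊆
                Pos.filter (fun x => ⟪f, x⟫ < ⟪f, α⟫) := by
              intro x hx
              obtain ⟨hx1, hx2⟩ := Finset.mem_filter.mp hx
              exact Finset.mem_filter.mpr ⟨hx1, lt_trans hx2 hδlt⟩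
            have hss : Pos.filter (fun x => ⟪f, x⟫ < ⟪f, δ⟫) ⊂
                Pos.filter (fun x => ⟪f, x⟫ < ⟪f, α⟫) :=
              (Finset.ssubset_iff_of_subset hsubset).mpr
                ⟨δ, Finset.mem_filter.mpr ⟨hδ, hδlt⟩,
                  fun hc => lt_irrefl _ (Finset.mem_filter.mp hc).2⟩
            have := Finset.card_lt_card hss
            omega
          obtain ⟨nβ, hnβ⟩ := ih β hβ (hsublt β hβ hβlt)
          obtain ⟨nγ, hnγ⟩ := ih γ hγ (hsublt γ hγ hγlt)
          refine ⟨fun v => nβ v + nγ v, ?_⟩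
          have hstep : ∀ p ∈ Δ, ((nβ p + nγ p : ℕ) : ℝ) • p
              = (nβ p : ℝ) • p + (nγ p : ℝ) • p := by
            intro p _
            push_cast
            rw [add_smul]
          rw [Finset.sum_congr rfl hstep, Finset.sum_add_distrib, ← hnβ, ← hnγ, heq]
    intro α hα
    exact key _ α hα le_rfl
  -- obtuseness of Δ
  have hob : ∀ a ∈ Δ, ∀ b ∈ Δ, a ≠ b → ⟪a, b⟫ ≤ 0 := by
    intro a ha b hb hab
    by_contra hpos'
    push_neg at hpos'
    have haΦ : a ∈ Φ := hPosΦ a (hΔPos a ha)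
    have hbΦ : b ∈ Φ := hPosΦ b (hΔPos b hb)
    have hIndec : ∀ c ∈ Δ, ¬ ∃ β ∈ Pos, ∃ γ ∈ Pos, c = β + γ := fun c hc =>
      (Finset.mem_filter.mp hc).2
    have hsub := root_sub Φ ⟨hfin, h0, hspan, hrefl, hint, hred⟩ haΦ hbΦ hab hpos'
    have hcases : (a - b ∈ Pos ∨ b - a ∈ Pos) := by
      rcases hsub with hd | hd
      · rcases posOrNeg _ hd with h1 | h1
        · left; exact h1
        · right; rwa [neg_sub] at h1
      · rcases posOrNeg _ hd with h1 | h1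
        · right; exact h1
        · left; rwa [neg_sub] at h1
    rcases hcases with h1 | h1
    · exact hIndec a ha ⟨b, hΔPos b hb, a - b, h1, by abel⟩
    · exact hIndec b hb ⟨a, hΔPos a ha, b - a, h1, by abel⟩
  have hΔf : ∀ v ∈ Δ, 0 < ⟪f, v⟫ := fun v hv => hPosf v (hΔPos v hv)
  have hliΔ : LinearIndependent ℝ (fun x : Δ => (x : V)) := obtuse_li f Δ hΔf hob
  -- every root is ± an ℕ-combination
  have hroots : ∀ γ ∈ Φ, (∃ n : V → ℕ, γ = ∑ α ∈ Δ, (n α : ℝ) • α) ∨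
      (∃ n : V → ℕ, γ = -∑ α ∈ Δ, (n α : ℝ) • α) := by
    intro γ hγ
    rcases posOrNeg γ hγ with h1 | h1
    · exact Or.inl (decomp γ h1)
    · obtain ⟨n, hn⟩ := decomp _ h1
      exact Or.inr ⟨n, by rw [← hn]; simp⟩
  -- span
  have hspanΔ : Submodule.span ℝ (Δ : Set V) = ⊤ := by
    rw [eq_top_iff, ← hspan]
    rw [Submodule.span_le]
    intro γ hγ
    rcases hroots γ hγ with ⟨n, hn⟩ | ⟨n, hn⟩
    · rw [hn]
      exact Submodule.sum_smul_mem _ _ (fun p hp => Submodule.subset_span hp)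
    · rw [hn]
      exact Submodule.neg_mem _
        (Submodule.sum_smul_mem _ _ (fun p hp => Submodule.subset_span hp))
  refine ⟨Δ, ⟨fun a ha => hPosΦ a (hΔPos a ha), hliΔ, hspanΔ, hroots⟩, ?_⟩
  intro ψ hψ
  exact decomp ψ (hmemPos ψ (hΨ hψ) (hΨpos ψ hψ))
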